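/- Let β be a nonsingular q-bic form on a (2m+2)-dimensional vector space V over an algebraically closed field k ⊇ F_{q^2}. Then there exists an (m+1)-dimensional totally isotropic subspace of V, i.e., the q-bic hypersurface of dimension 2m contains an m-plane. -/

import Mathlib

namespace QBicProof

open Module Polynomial Finset

variable {q : ℕ} {k : Type*} [Field k] {V : Type*} [AddCommGroup V] [Module k V]

structure IsQBic (q : ℕ) (k : Type*) [Field k] (V : Type*) [AddCommGroup V] [Module k V]
    (β : V → V → k) : Prop where
  addl : ∀ u v w : V, β (u + v) w = β u w + β v w
  addr : ∀ u v w : V, β u (v + w) = β u v + β u w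
  smull : ∀ (c : k) (u v : V), β (c • u) v = c ^ q * β u v
  smulr : ∀ (c : k) (u v : V), β u (c • v) = c * β u v

namespace IsQBic

variable {β : V → V → k}

lemma zl (hβ : IsQBic q k V β) (w : V) : β 0 w = 0 := by
  have h := hβ.addl 0 0 w
  rw [add_zero] at h
  exact left_eq_add.mp h

lemma zr (hβ : IsQBic q k V β) (w : V) : β w 0 = 0 := by
  have h := hβ.addr w 0 0
  rw [add_zero] at h
  exact left_eq_add.mp h

lemma subl (hβ : IsQBic q k V β) (u v w : V) : β (u - v) w = β u w - β v w := by
  have h := hβ.addl (u - v) v w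
  rw [sub_add_cancel] at h
  linear_combination -h

lemma subr (hβ : IsQBic q k V β) (u v w : V) : β u (v - w) = β u v - β u w := by
  have h := hβ.addr u (v - w) w
  rw [sub_add_cancel] at h
  linear_combination -h

lemma restrict (hβ : IsQBic q k V β) (W : Submodule k V) :
    IsQBic q k W (fun x y => β x y) := by
  constructor
  · intro u v w; exact_mod_cast hβ.addl u v w
  · intro u v w; exact_mod_cast hβ.addr u v w
  · intro c u v; rw [Submodule.coe_smul]; exact hβ.smull c u v
  · intro c u v; rw [Submodule.coe_smul]; exact hβ.smulr c u v

end IsQBic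

/-- Two "functionals" with the kernel of `f` inside the kernel of `g` are proportional. -/
lemma prop_fun (f g : V → k)
    (hfadd : ∀ x y, f (x + y) = f x + f y) (hfsmul : ∀ (c : k)x, f (c • x) = c * f x)
    (hgadd : ∀ x y, g (x + y) = g x + g y) (hgsmul : ∀ (c : k) x, g (c • x) = c * g x)
    (hker : ∀ x, f x = 0 → g x = 0) (z : V) (hz : f z ≠ 0) :
    ∀ x, g x = (g z / f z) * f x := by
  intro x
  have hfz : f (x - (f x / f z) • z) = 0 := by
    have h := hfadd (x - (f x / f z) • z) ((f x / f z) • z)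
    rw [sub_add_cancel, hfsmul] at h
    have hA : f (x - (f x / f z) • z) = f x - f x / f z * f z := by linear_combination -h
    rw [hA, div_mul_cancel₀ _ hz, sub_self]
  have hg := hker _ hfz
  have h2 := hgadd (x - (f x / f z) • z) ((f x / f z) • z)
  rw [sub_add_cancel, hgsmul, hg, zero_add] at h2
  rw [h2]; field_simp

/-- The `q`-power Frobenius as a ring equivalence. -/
lemma exists_frobEquiv [IsAlgClosed k] (hq : 2 ≤ q)
    (hfrob : ∀ a b : k, (a + b) ^ q = a ^ q + b ^ q) :
    ∃ φ : k ≃+* k, ∀ x, φ x = x ^ q := by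
  have hq0 : q ≠ 0 := by omega
  let f : k →+* k :=
    { toFun := fun x => x ^ q
      map_one' := one_pow q
      map_mul' := fun x y => mul_pow x y q
      map_zero' := zero_pow hq0
      map_add' := hfrob }
  have hinj : Function.Injective f := by
    intro x y hxy
    have : f (x - y) = 0 := by rw [map_sub, hxy, sub_self]
    have h2 : (x - y) ^ q = 0 := this
    have := pow_eq_zero_iff hq0 |>.mp h2
    exact sub_eq_zero.mp this
  have hsurj : Function.Surjective f := fun a => IsAlgClosed.exists_pow_nat_eq a (by omega)
  exact ⟨RingEquiv.ofBijective f ⟨hinj, hsurj⟩, fun x => rfl⟩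


/-- Auxiliary: solving the recursive system for the semilinear eigenvector. -/
lemma exists_root_aux {k : Type*} [Field k] [IsAlgClosed k] {Q : ℕ} (hQ : 2 ≤ Q)
    (c : ℕ → k) (hc0 : c 0 ≠ 0) (r' : ℕ) :
    ∃ (t : k) (a : ℕ → k), t ≠ 0 ∧ a 0 = c 0 * t ^ Q ∧
      (∀ i, a (i + 1) = (a i) ^ Q + c (i + 1) * t ^ Q) ∧ a r' = t := by
  classical
  -- the polynomials B i with A i = B i * X ^ Q encoding the recursion
  let B : ℕ → Polynomial k := fun i => Nat.rec (C (c 0))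
    (fun i Bi => Bi ^ Q * X ^ (Q * Q - Q) + C (c (i + 1))) i
  have hB0 : B 0 = C (c 0) := rfl
  have hBsucc : ∀ i, B (i + 1) = (B i) ^ Q * X ^ (Q * Q - Q) + C (c (i + 1)) := fun i => rfl
  have hQQ : Q ≤ Q * Q := Nat.le_mul_of_pos_left Q (by omega)
  have hBne : ∀ i, B i ≠ 0 := by
    intro i
    induction i with
    | zero => rw [hB0]; exact fun h => hc0 (by simpa using h)
    | succ i ih =>
      rw [hBsucc]
      intro h
      have h2 : (B i) ^ Q * X ^ (Q * Q - Q) = C (-c (i + 1)) := by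
        rw [map_neg]; linear_combination h
      have hne : (B i) ^ Q * X ^ (Q * Q - Q) ≠ 0 :=
        mul_ne_zero (pow_ne_zero _ ih) (pow_ne_zero _ X_ne_zero)
      have hdeg := congrArg natDegree h2
      rw [natDegree_mul (pow_ne_zero _ ih) (pow_ne_zero _ X_ne_zero),
        natDegree_pow, natDegree_X_pow, natDegree_C] at hdeg
      have h5 : 2 * Q ≤ Q * Q := Nat.mul_le_mul_right Q hQ
      have h6 := (Nat.add_eq_zero.mp hdeg).2
      omega
  let A : ℕ → Polynomial k := fun i => B i * X ^ Q
  have hA : ∀ i, A i = B i * X ^ Q := fun _ => rfl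
  have hArec : ∀ i, A (i + 1) = (A i) ^ Q + C (c (i + 1)) * X ^ Q := by
    intro i
    rw [hA (i + 1), hA i, hBsucc, mul_pow, ← pow_mul, add_mul, mul_assoc, ← pow_add]
    rw [Nat.sub_add_cancel hQQ]
  -- the final polynomial
  set Fp : Polynomial k := A r' - X with hFp
  have hcoeff0 : Fp.coeff 0 = 0 := by
    rw [hFp, coeff_sub, coeff_X_zero, sub_zero]
    rw [hA, coeff_mul_X_pow', if_neg (by omega)]
  obtain ⟨Fq, hFq⟩ : X ∣ Fp := X_dvd_iff.mpr hcoeff0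
  have hFq0 : Fq.coeff 0 = -1 := by
    have h1 : Fp.coeff 1 = -1 := by
      rw [hFp, coeff_sub, coeff_X_one]
      have h3 : (A r').coeff 1 = 0 := by
        rw [hA, coeff_mul_X_pow', if_neg (by omega)]
      rw [h3]; ring
    rw [hFq, coeff_X_mul] at h1
    exact h1
  have hdB := degree_eq_natDegree (hBne r')
  have hdegA : (A r').degree = (((B r').natDegree + Q : ℕ) : WithBot ℕ) := by
    rw [hA, degree_mul, degree_X_pow, hdB, ← Nat.cast_add]
  have hdegFp : Fp.degree = (((B r').natDegree + Q : ℕ) : WithBot ℕ) := by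
    rw [hFp, degree_sub_eq_left_of_degree_lt, hdegA]
    rw [hdegA, degree_X]
    exact_mod_cast by omega
  have hFqne : Fq ≠ 0 := fun h => by simp [h] at hFq0
  have hdegFq : Fq.degree ≠ 0 := by
    intro h
    have h2 : Fp.degree = 1 := by
      rw [hFq, degree_mul, degree_X, h, add_zero]
    rw [hdegFp] at h2
    have : ((B r').natDegree + Q : ℕ) = 1 := by exact_mod_cast h2
    omega
  obtain ⟨t, ht⟩ := IsAlgClosed.exists_root Fq hdegFq
  have htne : t ≠ 0 := by
    intro h
    rw [h] at ht
    have h2 : Fq.eval 0 = 0 := ht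
    rw [← coeff_zero_eq_eval_zero, hFq0] at h2
    simp at h2
  have hFpt : Fp.eval t = 0 := by
    rw [hFq, eval_mul, ht.eq_zero, mul_zero]
  refine ⟨t, fun i => (A i).eval t, htne, ?_, ?_, ?_⟩
  · show (A 0).eval t = c 0 * t ^ Q
    rw [show A 0 = C (c 0) * X ^ Q from rfl]
    simp
  · intro i
    show (A (i + 1)).eval t = ((A i).eval t) ^ Q + c (i + 1) * t ^ Q
    rw [hArec]
    simp
  · show (A r').eval t = t
    have h2 : (A r').eval t - t = 0 := by
      have h3 := hFpt
      rwa [hFp, eval_sub, eval_X] at h3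
    linear_combination h2


section Hermitian

variable {q : ℕ} {k : Type*} [Field k] [IsAlgClosed k]
variable {V : Type*} [AddCommGroup V] [Module k V] [FiniteDimensional k V]

/-- Every nonsingular q-bic form on a nonzero space has a nonzero "Hermitian" vector. -/
lemma exists_hermitian (hq : 2 ≤ q)
    (hfrob : ∀ a b : k, (a + b) ^ q = a ^ q + b ^ q)
    {β : V → V → k} (hβ : IsQBic q k V β)
    (hnsl : ∀ v : V, (∀ w : V, β v w = 0) → v = 0)
    (hnsr : ∀ w : V, (∀ v : V, β v w = 0) → w = 0)
    (hV : 0 < Module.finrank k V) :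
    ∃ v : V, v ≠ 0 ∧ ∀ x, β x v = (β v x) ^ q := by
  classical
  obtain ⟨φ, hφ⟩ := exists_frobEquiv hq hfrob
  have hσ : ∀ x : k, φ.symm (x ^ q) = x := fun x => by rw [← hφ]; exact φ.symm_apply_apply x
  have hσq : ∀ x : k, (φ.symm x) ^ q = x := fun x => by rw [← hφ]; exact φ.apply_symm_apply x
  -- uniqueness lemmas
  have huniqr : ∀ y y' : V, (∀ x, β x y = β x y') → y = y' := by
    intro y y' h
    have : y - y' = 0 := hnsr _ (fun x => by rw [hβ.subr, h x, sub_self])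
    exact sub_eq_zero.mp this
  have huniql : ∀ y y' : V, (∀ x, β y x = β y' x) → y = y' := by
    intro y y' h
    have : y - y' = 0 := hnsl _ (fun x => by rw [hβ.subl, h x, sub_self])
    exact sub_eq_zero.mp this
  -- the semilinear map G into the dual
  let G : V → Module.Dual k V := fun y =>
    { toFun := fun x => φ.symm (β x y)
      map_add' := fun x x' => by
        show φ.symm (β (x + x') y) = φ.symm (β x y) + φ.symm (β x' y)
        rw [hβ.addl, map_add]
      map_smul' := fun c x => by
        show φ.symm (β (c • x) y) = c * φ.symm (β x y)
        rw [hβ.smull, map_mul, hσ] }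
  have hGapp : ∀ y x, G y x = φ.symm (β x y) := fun y x => rfl
  have hGadd : ∀ y y', G (y + y') = G y + G y' := by
    intro y y'
    ext x
    simp only [hGapp, LinearMap.add_apply]
    rw [hβ.addr, map_add]
  have hGsmul : ∀ (c : k) y, G (c • y) = φ.symm c • G y := by
    intro c y
    ext x
    simp only [hGapp, LinearMap.smul_apply, smul_eq_mul]
    rw [hβ.smulr, map_mul]
  have hGzero : G 0 = 0 := by
    ext x
    simp only [hGapp, LinearMap.zero_apply]
    rw [hβ.zr, map_zero]
  have hGinj : ∀ y y', G y = G y' → y = y' := by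
    intro y y' h
    refine huniqr y y' fun x => ?_
    have h2 : φ.symm (β x y) = φ.symm (β x y') := by
      rw [← hGapp, ← hGapp, h]
    exact φ.symm.injective h2
  -- surjectivity of G via a basis
  set n := Module.finrank k V with hn
  let e := Module.finBasis k V
  have hGsum : ∀ (s : Finset (Fin n)) (f : Fin n → V),
      G (∑ i ∈ s, f i) = ∑ i ∈ s, G (f i) := by
    intro s f
    induction s using Finset.cons_induction with
    | empty => simpa using hGzero
    | cons a s ha ih => rw [Finset.sum_cons, Finset.sum_cons, hGadd, ih]
  have hGsurj : ∀ f : Module.Dual k V, ∃ y, G y = f := by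
    have hLI : LinearIndependent k (fun i => G (e i)) := by
      rw [Fintype.linearIndependent_iff]
      intro g hg
      have h2 : G (∑ i, φ (g i) • e i) = 0 := by
        rw [hGsum]
        calc ∑ i, G (φ (g i) • e i) = ∑ i, g i • G (e i) := by
              refine Finset.sum_congr rfl fun i _ => ?_
              rw [hGsmul, φ.symm_apply_apply]
          _ = 0 := hg
      have h3 : (∑ i, φ (g i) • e i) = 0 := hGinj _ 0 (by rw [h2, hGzero])
      intro i
      have h4 := Fintype.linearIndependent_iff.mp e.linearIndependent (fun i => φ (g i)) h3 i
      have := φ.injective (h4.trans (map_zero φ).symm)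
      exact this
    haveI : Nonempty (Fin n) := ⟨⟨0, hV⟩⟩
    have hcard : Fintype.card (Fin n) = Module.finrank k (Module.Dual k V) := by
      rw [Fintype.card_fin, Subspace.dual_finrank_eq]
    have hsp := hLI.span_eq_top_of_card_eq_finrank hcard
    intro f
    have hf : f ∈ Submodule.span k (Set.range fun i => G (e i)) := by rw [hsp]; trivial
    obtain ⟨cf, hcf⟩ := (Submodule.mem_span_range_iff_exists_fun k).mp hf
    refine ⟨∑ i, φ (cf i) • e i, ?_⟩
    rw [hGsum]
    calc ∑ i, G (φ (cf i) • e i) = ∑ i, cf i • G (e i) := by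
          refine Finset.sum_congr rfl fun i _ => ?_
          rw [hGsmul, φ.symm_apply_apply]
      _ = f := hcf
  -- the twisted operator S
  have hSex : ∀ v : V, ∃ y : V, ∀ x, β x y = (β v x) ^ q := by
    intro v
    obtain ⟨y, hy⟩ := hGsurj
      { toFun := fun x => β v x
        map_add' := fun x x' => hβ.addr v x x'
        map_smul' := fun c x => by
          simp only [RingHom.id_apply, smul_eq_mul]; exact hβ.smulr c v x }
    refine ⟨y, fun x => ?_⟩
    have h2 : φ.symm (β x y) = β v x := congrFun (congrArg DFunLike.coe hy) x
    calc β x y = (φ.symm (β x y)) ^ q := (hσq _).symm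
      _ = (β v x) ^ q := by rw [h2]
  let S : V → V := fun v => Classical.choose (hSex v)
  have hS : ∀ v x, β x (S v) = (β v x) ^ q := fun v => Classical.choose_spec (hSex v)
  have hS0 : S 0 = 0 := by
    refine huniqr _ _ fun x => ?_
    rw [hS, hβ.zl, hβ.zr, zero_pow (by omega)]
  have hSadd : ∀ u v, S (u + v) = S u + S v := by
    intro u v
    refine huniqr _ _ fun x => ?_
    rw [hS, hβ.addr, hS, hS, hβ.addl, hfrob]
  have hSsmul : ∀ (c : k) v, S (c • v) = c ^ (q * q) • S v := by
    intro c v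
    refine huniqr _ _ fun x => ?_
    rw [hS, hβ.smulr, hS, hβ.smull, mul_pow, ← pow_mul]
  have hSinj : ∀ u v, S u = S v → u = v := by
    intro u v h
    refine huniql _ _ fun x => ?_
    have h2 : (β u x) ^ q = (β v x) ^ q := by rw [← hS, ← hS, h]
    have h3 : φ (β u x) = φ (β v x) := by rw [hφ, hφ]; exact h2
    exact φ.injective h3
  have hSsum : ∀ (s : Finset ℕ) (f : ℕ → V), S (∑ i ∈ s, f i) = ∑ i ∈ s, S (f i) := by
    intro s f
    induction s using Finset.cons_induction with
    | empty => simpa using hS0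
    | cons a s ha ih => rw [Finset.sum_cons, Finset.sum_cons, hSadd, ih]
  -- iterates of S
  have : Nontrivial V := Module.nontrivial_of_finrank_pos hV
  obtain ⟨v₀, hv₀⟩ := exists_ne (0 : V)
  let w : ℕ → V := fun i => S^[i] v₀
  have hw0 : w 0 = v₀ := rfl
  have hwsucc : ∀ i, w (i + 1) = S (w i) := fun i => Function.iterate_succ_apply' S i v₀
  let M : ℕ → Submodule k V := fun r => Submodule.span k (w '' Set.Iio r)
  have hwM : ∀ i j, i < j → w i ∈ M j := fun i j hij =>
    Submodule.subset_span ⟨i, hij, rfl⟩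
  have hsumM : ∀ (r : ℕ) (f : ℕ → k), (∑ i ∈ Finset.range r, f i • w i) ∈ M r := by
    intro r f
    exact Submodule.sum_mem _ fun i hi =>
      Submodule.smul_mem _ _ (hwM i r (Finset.mem_range.mp hi))
  have hex : ∃ r, w r ∈ M r := by
    by_contra h
    push_neg at h
    have hchain : ∀ r, r ≤ Module.finrank k (M r) := by
      intro r
      induction r with
      | zero => omega
      | succ r ih =>
        have hlt : M r < M (r + 1) := by
          refine lt_of_le_of_ne (Submodule.span_mono (Set.image_mono fun x hx => ?_)) ?_
          · exact lt_trans hx (Nat.lt_succ_self r)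
          · intro heq
            exact h r (heq ▸ hwM r (r + 1) (Nat.lt_succ_self r))
        have := Submodule.finrank_lt_finrank_of_lt hlt
        omega
    have h1 := hchain (n + 1)
    have h2 : Module.finrank k (M (n + 1)) ≤ n := hn ▸ Submodule.finrank_le _
    omega
  let r := Nat.find hex
  have hr : w r ∈ M r := Nat.find_spec hex
  have hmin : ∀ j, j < r → w j ∉ M j := fun j hj => Nat.find_min hex hj
  have hrpos : 0 < r := by
    rcases Nat.eq_zero_or_pos r with h0 | h
    · exfalso
      have : w 0 ∈ M 0 := h0 ▸ hr
      have h2 : M 0 = ⊥ := by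
        have h3 : w '' Set.Iio 0 = (∅ : Set V) := by ext x; simp
        simp only [M]
        rw [h3, Submodule.span_empty]
      rw [h2, Submodule.mem_bot, hw0] at this
      exact hv₀ this
    · exact h
  obtain ⟨r', hr'⟩ : ∃ r', r = r' + 1 := ⟨r - 1, by omega⟩
  -- extract coefficients
  have hset : w '' Set.Iio r = Set.range fun i : Fin r => w i := by
    ext x
    constructor
    · rintro ⟨i, hi, rfl⟩; exact ⟨⟨i, hi⟩, rfl⟩
    · rintro ⟨i, rfl⟩; exact ⟨i.1, i.isLt, rfl⟩
  have hMr : M r = Submodule.span k (Set.range fun i : Fin r => w i) := by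
    simp only [M]
    rw [hset]
  obtain ⟨cf, hcf⟩ := (Submodule.mem_span_range_iff_exists_fun k).mp (hMr ▸ hr)
  let cc : ℕ → k := fun i => if h : i < r then cf ⟨i, h⟩ else 0
  have hcc : ∑ i ∈ Finset.range r, cc i • w i = w r := by
    rw [← Fin.sum_univ_eq_sum_range (fun i => cc i • w i) r, ← hcf]
    refine Finset.sum_congr rfl fun i _ => ?_
    congr 1
    simp only [cc]
    rw [dif_pos i.isLt]
  -- cc 0 ≠ 0
  have hcc0 : cc 0 ≠ 0 := by
    intro h0
    have h1 : ∑ i ∈ Finset.range r, cc i • w i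
        = ∑ i ∈ Finset.range r', cc (i + 1) • w (i + 1) := by
      rw [hr', Finset.sum_range_succ']
      rw [h0, zero_smul, add_zero]
    have h2 : S (∑ i ∈ Finset.range r', φ.symm (φ.symm (cc (i + 1))) • w i) = S (w r') := by
      rw [hSsum]
      have h3 : ∀ i, S (φ.symm (φ.symm (cc (i + 1))) • w i) = cc (i + 1) • w (i + 1) := by
        intro i
        rw [hSsmul, hwsucc]
        congr 1
        rw [show q * q = q * q from rfl, pow_mul, hσq, hσq]
      calc ∑ i ∈ Finset.range r', S (φ.symm (φ.symm (cc (i + 1))) • w i)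
          = ∑ i ∈ Finset.range r', cc (i + 1) • w (i + 1) :=
            Finset.sum_congr rfl fun i _ => h3 i
        _ = ∑ i ∈ Finset.range r, cc i • w i := h1.symm
        _ = w r := hcc
        _ = S (w r') := by rw [hr', hwsucc]
    have h4 := hSinj _ _ h2
    have h5 : w r' ∈ M r' := h4 ▸ hsumM r' _
    exact hmin r' (by omega) h5
  -- solve the recursion
  obtain ⟨t, a, htne, ha0, harec, har⟩ :=
    exists_root_aux (k := k) (Q := q * q)
      (by calc 2 ≤ q := hq
            _ ≤ q * q := Nat.le_mul_of_pos_left q (by omega)) cc hcc0 r'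
  set v : V := ∑ i ∈ Finset.range r, a i • w i with hv
  have hvS : S v = v := by
    rw [hv, hSsum]
    have h3 : ∀ i, S (a i • w i) = (a i) ^ (q * q) • w (i + 1) := by
      intro i; rw [hSsmul, hwsucc]
    calc ∑ i ∈ Finset.range r, S (a i • w i)
        = ∑ i ∈ Finset.range r, (a i) ^ (q * q) • w (i + 1) :=
          Finset.sum_congr rfl fun i _ => h3 i
      _ = (∑ i ∈ Finset.range r', (a i) ^ (q * q) • w (i + 1))
          + (a r') ^ (q * q) • w (r' + 1) := by rw [hr', Finset.sum_range_succ]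
      _ = (∑ i ∈ Finset.range r', (a i) ^ (q * q) • w (i + 1))
          + (∑ i ∈ Finset.range r', (t ^ (q * q) * cc (i + 1)) • w (i + 1)
             + (t ^ (q * q) * cc 0) • w 0) := by
          congr 1
          rw [har]
          have h5 : w (r' + 1) = ∑ i ∈ Finset.range (r' + 1), cc i • w i := by
            rw [← hr', ← hcc, hr']
          rw [h5, Finset.smul_sum, Finset.sum_range_succ']
          simp only [smul_smul]
      _ = (∑ i ∈ Finset.range r', ((a i) ^ (q * q) + t ^ (q * q) * cc (i + 1)) • w (i + 1))
          + (t ^ (q * q) * cc 0) • w 0 := by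
          rw [← add_assoc, ← Finset.sum_add_distrib]
          congr 1
          refine Finset.sum_congr rfl fun i _ => ?_
          rw [add_smul]
      _ = (∑ i ∈ Finset.range r', a (i + 1) • w (i + 1)) + a 0 • w 0 := by
          congr 1
          · refine Finset.sum_congr rfl fun i _ => ?_
            congr 1
            rw [harec i]
            ring
          · congr 1
            rw [ha0]
            ring
      _ = ∑ i ∈ Finset.range r, a i • w i := by rw [hr', Finset.sum_range_succ']
  have hvne : v ≠ 0 := by
    intro h0
    have h1 : (∑ i ∈ Finset.range r', a i • w i) + a r' • w r' = 0 := by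
      rw [← Finset.sum_range_succ, ← hr', ← hv]; exact h0
    rw [har] at h1
    have h3 : t • w r' = -∑ i ∈ Finset.range r', a i • w i := by
      linear_combination (norm := module) h1
    have h2 : w r' = t⁻¹ • (-∑ i ∈ Finset.range r', a i • w i) := by
      rw [← h3, smul_smul, inv_mul_cancel₀ htne, one_smul]
    have h4 : w r' ∈ M r' := by
      rw [h2]
      exact Submodule.smul_mem _ _ (Submodule.neg_mem _ (hsumM r' a))
    exact hmin r' (by omega) h4
  refine ⟨v, hvne, fun x => ?_⟩
  rw [← hS v x]
  rw [hvS]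

/-- On a space of dimension at least 2 there is a nonzero isotropic Hermitian vector. -/
lemma exists_hermitian_iso (hq : 2 ≤ q)
    (hfrob : ∀ a b : k, (a + b) ^ q = a ^ q + b ^ q)
    {β : V → V → k} (hβ : IsQBic q k V β)
    (hnsl : ∀ v : V, (∀ w : V, β v w = 0) → v = 0)
    (hnsr : ∀ w : V, (∀ v : V, β v w = 0) → w = 0)
    (hV : 2 ≤ Module.finrank k V) :
    ∃ v : V, v ≠ 0 ∧ (∀ x, β x v = (β v x) ^ q) ∧ β v v = 0 := by
  classical
  obtain ⟨φ, hφ⟩ := exists_frobEquiv hq hfrob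
  obtain ⟨v₁, hv₁ne, hv₁⟩ := exists_hermitian hq hfrob hβ hnsl hnsr (by omega)
  by_cases hc : β v₁ v₁ = 0
  · exact ⟨v₁, hv₁ne, hv₁, hc⟩
  let fv : V →ₗ[k] k :=
    { toFun := fun x => β v₁ x
      map_add' := hβ.addr v₁
      map_smul' := fun c x => by
        simp only [RingHom.id_apply, smul_eq_mul]; exact hβ.smulr c v₁ x }
  set W := LinearMap.ker fv with hWdef
  have hmemW : ∀ x : V, x ∈ W ↔ β v₁ x = 0 := fun x => LinearMap.mem_ker
  have hdec : ∀ z : V, ∃ (y : V) (a : k), y ∈ W ∧ z = y + a • v₁ := by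
    intro z
    refine ⟨z - (β v₁ z / β v₁ v₁) • v₁, β v₁ z / β v₁ v₁, ?_, (sub_add_cancel z _).symm⟩
    rw [hmemW, hβ.subr, hβ.smulr, div_mul_cancel₀ _ hc, sub_self]
  have hWnsl : ∀ x : W, (∀ y : W, β (x : V) (y : V) = 0) → x = 0 := by
    intro x hx
    refine Submodule.coe_eq_zero.mp (hnsl _ fun z => ?_)
    obtain ⟨y, a, hyW, rfl⟩ := hdec z
    have h1 : β (x : V) y = 0 := hx ⟨y, hyW⟩
    have h2 : β (x : V) v₁ = 0 := by
      rw [hv₁, (hmemW _).mp x.2, zero_pow (by omega : q ≠ 0)]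
    rw [hβ.addr, hβ.smulr, h1, h2, mul_zero, add_zero]
  have hWnsr : ∀ x : W, (∀ y : W, β (y : V) (x : V) = 0) → x = 0 := by
    intro x hx
    refine Submodule.coe_eq_zero.mp (hnsr _ fun z => ?_)
    obtain ⟨y, a, hyW, rfl⟩ := hdec z
    have h1 : β y (x : V) = 0 := hx ⟨y, hyW⟩
    have h2 : β v₁ (x : V) = 0 := (hmemW _).mp x.2
    rw [hβ.addl, hβ.smull, h1, h2, mul_zero, add_zero]
  have hrange : Module.finrank k (LinearMap.range fv) = 1 := by
    refine le_antisymm ?_ ?_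
    · have h1 := Submodule.finrank_le (LinearMap.range fv)
      rwa [Module.finrank_self] at h1
    · by_contra h
      push_neg at h
      have h0 : Module.finrank k (LinearMap.range fv) = 0 := by omega
      have h2 := Submodule.finrank_eq_zero.mp h0
      have h3 : fv v₁ ∈ LinearMap.range fv := LinearMap.mem_range_self fv v₁
      rw [h2, Submodule.mem_bot] at h3
      exact hc h3
  have hWrank : Module.finrank k W = Module.finrank k V - 1 := by
    have h1 := LinearMap.finrank_range_add_finrank_ker fv
    rw [hrange, ← hWdef] at h1
    omega
  obtain ⟨v', hv'ne, hv'W⟩ := exists_hermitian hq hfrob (hβ.restrict W)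
    (fun x hx => hWnsl x hx) (fun x hx => hWnsr x hx) (by omega)
  have hv'herm : ∀ z : V, β z (v' : V) = (β (v' : V) z) ^ q := by
    intro z
    obtain ⟨y, a, hyW, rfl⟩ := hdec z
    have h1 : β v₁ (v' : V) = 0 := (hmemW _).mp v'.2
    have h2 : β (v' : V) v₁ = 0 := by rw [hv₁, h1, zero_pow (by omega : q ≠ 0)]
    rw [hβ.addl, hβ.smull, h1, mul_zero, add_zero,
      hβ.addr, hβ.smulr, h2, mul_zero, add_zero]
    exact hv'W ⟨y, hyW⟩
  by_cases hc' : β (v' : V) (v' : V) = 0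
  · exact ⟨(v' : V), fun h => hv'ne (Submodule.coe_eq_zero.mp h), hv'herm, hc'⟩
  · have hcq : (β v₁ v₁) ^ q = β v₁ v₁ := (hv₁ v₁).symm
    have hc'q : (β (v' : V) (v' : V)) ^ q = β (v' : V) (v' : V) := (hv'herm (v' : V)).symm
    set e := -(β (v' : V) (v' : V)) / β v₁ v₁ with he
    have hene : e ≠ 0 := div_ne_zero (neg_ne_zero.mpr hc') hc
    have heq : e ^ q = e := by
      rw [← hφ, he, map_div₀, map_neg, hφ, hφ, hcq, hc'q]
    have hdeg : (X ^ (q + 1) - C e : Polynomial k).degree ≠ 0 := by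
      rw [Polynomial.degree_X_pow_sub_C (by omega : 0 < q + 1) e]
      exact_mod_cast (by omega : (q + 1 : ℕ) ≠ 0)
    obtain ⟨a, ha⟩ := IsAlgClosed.exists_root _ hdeg
    have ha' : a ^ (q + 1) = e := by
      have h1 := ha
      rw [IsRoot, eval_sub, eval_pow, eval_X, eval_C] at h1
      linear_combination h1
    have hane : a ≠ 0 := by
      rintro rfl
      rw [zero_pow (by omega : q + 1 ≠ 0)] at ha'
      exact hene ha'.symm
    have haQ : a ^ (q * q) = a := by
      have h2 : (a ^ (q + 1)) ^ q = a ^ (q + 1) := by rw [ha', heq]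
      have h1 : a ^ (q * q) * a ^ q = a * a ^ q := by
        calc a ^ (q * q) * a ^ q = a ^ (q * q + q) := by rw [pow_add]
          _ = a ^ ((q + 1) * q) := by rw [show q * q + q = (q + 1) * q by ring]
          _ = (a ^ (q + 1)) ^ q := by rw [pow_mul]
          _ = a ^ (q + 1) := h2
          _ = a * a ^ q := by rw [pow_succ]; ring
      exact mul_right_cancel₀ (pow_ne_zero q hane) h1
    have h2 : β v₁ (v' : V) = 0 := (hmemW _).mp v'.2
    have h3 : β (v' : V) v₁ = 0 := by rw [hv₁, h2, zero_pow (by omega : q ≠ 0)]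
    have h1v : β v₁ (a • v₁ + (v' : V)) = a * β v₁ v₁ := by
      rw [hβ.addr, hβ.smulr, h2, add_zero]
    have hvne : a • v₁ + (v' : V) ≠ 0 := by
      intro h0
      rw [h0, hβ.zr] at h1v
      exact (mul_ne_zero hane hc) h1v.symm
    have hherm : ∀ z, β z (a • v₁ + (v' : V)) = (β (a • v₁ + (v' : V)) z) ^ q := by
      intro z
      rw [hβ.addr, hβ.smulr, hβ.addl, hβ.smull, hv₁ z, hv'herm z,
        ← hφ (a ^ q * β v₁ z + β (v' : V) z), map_add, map_mul, hφ, hφ, hφ,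
        ← pow_mul, haQ]
    have hvv : β (a • v₁ + (v' : V)) (a • v₁ + (v' : V)) = 0 := by
      have h4 : a ^ (q + 1) * β v₁ v₁ = -(β (v' : V) (v' : V)) := by
        rw [ha', he, div_mul_cancel₀ _ hc]
      simp only [hβ.addl, hβ.addr, hβ.smull, hβ.smulr, h2, h3, mul_zero, add_zero, zero_add]
      rw [show a ^ q * (a * β v₁ v₁) = a ^ (q + 1) * β v₁ v₁ by rw [pow_succ]; ring, h4]
      ring
    exact ⟨a • v₁ + (v' : V), hvne, hherm, hvv⟩

end Hermitian


universe uV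

set_option maxHeartbeats 1000000 in
set_option synthInstance.maxHeartbeats 400000 in
/-- Main induction: a nonsingular q-bic form on an n-dimensional space has a totally
isotropic subspace of dimension n/2. -/
lemma qbic_aux {q : ℕ} {k : Type*} [Field k] [IsAlgClosed k] (hq : 2 ≤ q)
    (hfrob : ∀ a b : k, (a + b) ^ q = a ^ q + b ^ q) :
    ∀ (n : ℕ) (V : Type uV) [AddCommGroup V] [Module k V] [FiniteDimensional k V]
      (β : V → V → k), IsQBic q k V β →
      (∀ v : V, (∀ w : V, β v w = 0) → v = 0) →
      (∀ w : V, (∀ v : V, β v w = 0) → w = 0) →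
      Module.finrank k V = n →
      ∃ U : Submodule k V, Module.finrank k U = n / 2 ∧
        ∀ u ∈ U, ∀ u' ∈ U, β u u' = 0 := by
  intro n
  induction n using Nat.strong_induction_on with
  | _ n ih =>
  intro V _ _ _ β hβ hnsl hnsr hn
  classical
  by_cases hn2 : n < 2
  · refine ⟨⊥, ?_, ?_⟩
    · rw [finrank_bot]; omega
    · intro u hu u' hu'
      rw [Submodule.mem_bot] at hu
      rw [hu, hβ.zl]
  push_neg at hn2
  obtain ⟨φ, hφ⟩ := exists_frobEquiv hq hfrob
  have hσq : ∀ x : k, (φ.symm x) ^ q = x := fun x => by rw [← hφ]; exact φ.apply_symm_apply x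
  have hσ : ∀ x : k, φ.symm (x ^ q) = x := fun x => by rw [← hφ]; exact φ.symm_apply_apply x
  obtain ⟨v, hvne, hvherm, hvv⟩ := exists_hermitian_iso hq hfrob hβ hnsl hnsr (by omega)
  let fv : V →ₗ[k] k :=
    { toFun := fun x => β v x
      map_add' := hβ.addr v
      map_smul' := fun c x => by
        simp only [RingHom.id_apply, smul_eq_mul]; exact hβ.smulr c v x }
  set W := LinearMap.ker fv with hWdef
  have hmemW : ∀ x : V, x ∈ W ↔ β v x = 0 := fun x => LinearMap.mem_ker
  have hvW : v ∈ W := (hmemW v).mpr hvv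
  have hxv : ∀ x : V, x ∈ W → β x v = 0 := fun x hx => by
    rw [hvherm, (hmemW x).mp hx, zero_pow (by omega : q ≠ 0)]
  have hfvne : ∃ x, β v x ≠ 0 := by
    by_contra h
    push_neg at h
    exact hvne (hnsl v h)
  obtain ⟨z0, hz0⟩ := hfvne
  have hrange : Module.finrank k (LinearMap.range fv) = 1 := by
    refine le_antisymm ?_ ?_
    · have h1 := Submodule.finrank_le (LinearMap.range fv)
      rwa [Module.finrank_self] at h1
    · by_contra h
      push_neg at h
      have h0 : Module.finrank k (LinearMap.range fv) = 0 := by omega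
      have h2 := Submodule.finrank_eq_zero.mp h0
      have h3 : fv z0 ∈ LinearMap.range fv := LinearMap.mem_range_self fv z0
      rw [h2, Submodule.mem_bot] at h3
      exact hz0 h3
  have hWrank : Module.finrank k W = n - 1 := by
    have h1 := LinearMap.finrank_range_add_finrank_ker fv
    rw [hrange, ← hWdef, hn] at h1
    omega
  let vW : W := ⟨v, hvW⟩
  have hvWne : vW ≠ 0 := fun h => hvne (Submodule.coe_eq_zero.mpr h)
  let Z : Submodule k W := Submodule.span k {vW}
  have hZrank : Module.finrank k Z = 1 := finrank_span_singleton hvWne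
  have hVqrank : Module.finrank k (W ⧸ Z) = n - 2 := by
    have h1 := Submodule.finrank_quotient_add_finrank Z
    rw [hZrank, hWrank] at h1
    omega
  let βq : (W ⧸ Z) → (W ⧸ Z) → k := fun aq bq =>
    β ((Quotient.out aq : W) : V) ((Quotient.out bq : W) : V)
  have hout : ∀ aq : W ⧸ Z, Submodule.Quotient.mk (Quotient.out aq) = aq := fun aq => by
    rw [← Submodule.Quotient.mk''_eq_mk]
    exact Quotient.out_eq' aq
  have hkill : ∀ z : W, z ∈ Z → ∀ y : W, β (z : V) (y : V) = 0 ∧ β (y : V) (z : V) = 0 := by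
    intro z hz y
    rw [Submodule.mem_span_singleton] at hz
    obtain ⟨c, rfl⟩ := hz
    constructor
    · rw [Submodule.coe_smul, hβ.smull, (hmemW (y : V)).mp y.2, mul_zero]
    · rw [Submodule.coe_smul, hβ.smulr, hxv (y : V) y.2, mul_zero]
  have hmkβ : ∀ x y : W,
      βq (Submodule.Quotient.mk x) (Submodule.Quotient.mk y) = β (x : V) (y : V) := by
    intro x y
    set x' : W := Quotient.out ((Submodule.Quotient.mk x : W ⧸ Z)) with hx'def
    set y' : W := Quotient.out ((Submodule.Quotient.mk y : W ⧸ Z)) with hy'def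
    have hx' : x' - x ∈ Z := (Submodule.Quotient.eq Z).mp (hout _)
    have hy' : y' - y ∈ Z := (Submodule.Quotient.eq Z).mp (hout _)
    show β (x' : V) (y' : V) = β (x : V) (y : V)
    have ex : (x' : V) = (x : V) + ((x' - x : W) : V) := by
      rw [Submodule.coe_sub]; abel
    have ey : (y' : V) = (y : V) + ((y' - y : W) : V) := by
      rw [Submodule.coe_sub]; abel
    rw [ex, ey, hβ.addl, hβ.addr, hβ.addr,
      (hkill _ hy' x).2, (hkill _ hx' y).1, (hkill _ hx' (y' - y)).1]
    ring
  have hβq : IsQBic q k (W ⧸ Z) βq := by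
    constructor
    · intro a b c'
      obtain ⟨x, rfl⟩ := Submodule.Quotient.mk_surjective Z a
      obtain ⟨y, rfl⟩ := Submodule.Quotient.mk_surjective Z b
      obtain ⟨z, rfl⟩ := Submodule.Quotient.mk_surjective Z c'
      rw [← Submodule.Quotient.mk_add, hmkβ, hmkβ, hmkβ, Submodule.coe_add, hβ.addl]
    · intro a b c'
      obtain ⟨x, rfl⟩ := Submodule.Quotient.mk_surjective Z a
      obtain ⟨y, rfl⟩ := Submodule.Quotient.mk_surjective Z b
      obtain ⟨z, rfl⟩ := Submodule.Quotient.mk_surjective Z c'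
      rw [← Submodule.Quotient.mk_add, hmkβ, hmkβ, hmkβ, Submodule.coe_add, hβ.addr]
    · intro c' a b
      obtain ⟨x, rfl⟩ := Submodule.Quotient.mk_surjective Z a
      obtain ⟨y, rfl⟩ := Submodule.Quotient.mk_surjective Z b
      rw [← Submodule.Quotient.mk_smul, hmkβ, hmkβ, Submodule.coe_smul, hβ.smull]
    · intro c' a b
      obtain ⟨x, rfl⟩ := Submodule.Quotient.mk_surjective Z a
      obtain ⟨y, rfl⟩ := Submodule.Quotient.mk_surjective Z b
      rw [← Submodule.Quotient.mk_smul, hmkβ, hmkβ, Submodule.coe_smul, hβ.smulr]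
  have hβqnsl : ∀ a : W ⧸ Z, (∀ b, βq a b = 0) → a = 0 := by
    intro a ha
    obtain ⟨x, rfl⟩ := Submodule.Quotient.mk_surjective Z a
    have hxy : ∀ y : W, β (x : V) (y : V) = 0 := fun y => by rw [← hmkβ]; exact ha _
    have hprop := prop_fun (fun z => β v z) (fun z => β (x : V) z)
      (hβ.addr v) (fun c z => hβ.smulr c v z)
      (hβ.addr (x : V)) (fun c z => hβ.smulr c (x : V) z)
      (fun z hz => hxy ⟨z, (hmemW z).mpr hz⟩) z0 hz0
    have hprop' : ∀ z, β (x : V) z = β (x : V) z0 / β v z0 * β v z := hprop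
    have hxeq : (x : V) = φ.symm (β (x : V) z0 / β v z0) • v := by
      have h1 : ∀ z, β ((x : V) - φ.symm (β (x : V) z0 / β v z0) • v) z = 0 := by
        intro z
        rw [hβ.subl, hβ.smull, hσq, hprop' z]
        ring
      exact sub_eq_zero.mp (hnsl _ h1)
    rw [Submodule.Quotient.mk_eq_zero]
    rw [Submodule.mem_span_singleton]
    exact ⟨φ.symm (β (x : V) z0 / β v z0), Subtype.ext hxeq.symm⟩
  have hβqnsr : ∀ a : W ⧸ Z, (∀ b, βq b a = 0) → a = 0 := by
    intro a ha
    obtain ⟨x, rfl⟩ := Submodule.Quotient.mk_surjective Z a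
    have hxy : ∀ y : W, β (y : V) (x : V) = 0 := fun y => by rw [← hmkβ]; exact ha _
    have hprop := prop_fun (fun z => β v z) (fun z => φ.symm (β z (x : V)))
      (hβ.addr v) (fun c z => hβ.smulr c v z)
      (fun z z' => by
        show φ.symm (β (z + z') (x : V)) = φ.symm (β z (x : V)) + φ.symm (β z' (x : V))
        rw [hβ.addl, map_add])
      (fun c z => by
        show φ.symm (β (c • z) (x : V)) = c * φ.symm (β z (x : V))
        rw [hβ.smull, map_mul, hσ])
      (fun z hz => by
        show φ.symm (β z (x : V)) = 0
        rw [hxy ⟨z, (hmemW z).mpr hz⟩, map_zero]) z0 hz0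
    have hprop' : ∀ z, φ.symm (β z (x : V)) = φ.symm (β z0 (x : V)) / β v z0 * β v z := hprop
    set a₀ := φ.symm (β z0 (x : V)) / β v z0 with ha₀
    have hxeq : (x : V) = (a₀ ^ q) • v := by
      have h1 : ∀ z, β z ((x : V) - (a₀ ^ q) • v) = 0 := by
        intro z
        rw [hβ.subr, hβ.smulr]
        have h2 : β z (x : V) = (φ.symm (β z (x : V))) ^ q := (hσq _).symm
        rw [h2, hprop' z, mul_pow, hvherm z]
        ring
      exact sub_eq_zero.mp (hnsr _ h1)
    rw [Submodule.Quotient.mk_eq_zero, Submodule.mem_span_singleton]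
    exact ⟨a₀ ^ q, Subtype.ext hxeq.symm⟩
  obtain ⟨Uq, hUqrank, hUqiso⟩ := ih (n - 2) (by omega) (W ⧸ Z) βq hβq hβqnsl hβqnsr hVqrank
  let U₁ : Submodule k W := Uq.comap Z.mkQ
  have hZU₁ : Z ≤ U₁ := by
    intro z hz
    rw [Submodule.mem_comap]
    have h1 : Z.mkQ z = 0 := by
      rw [Submodule.mkQ_apply, Submodule.Quotient.mk_eq_zero]; exact hz
    rw [h1]
    exact Uq.zero_mem
  have hU₁rank : Module.finrank k U₁ = n / 2 := by
    have hgr : LinearMap.range (Z.mkQ.comp U₁.subtype) = Uq := by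
      rw [LinearMap.range_comp, Submodule.range_subtype]
      exact Submodule.map_comap_eq_of_surjective Z.mkQ_surjective Uq
    have hgk : LinearMap.ker (Z.mkQ.comp U₁.subtype) = Z.comap U₁.subtype := by
      ext x
      rw [LinearMap.mem_ker, Submodule.mem_comap]
      show Z.mkQ (U₁.subtype x) = 0 ↔ _
      rw [Submodule.mkQ_apply, Submodule.Quotient.mk_eq_zero]
    have h1 := LinearMap.finrank_range_add_finrank_ker (Z.mkQ.comp U₁.subtype)
    rw [hgr, hgk] at h1
    have h2 : Module.finrank k (Z.comap U₁.subtype) = 1 := by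
      rw [(Submodule.comapSubtypeEquivOfLe hZU₁).finrank_eq, hZrank]
    rw [hUqrank, h2] at h1
    omega
  refine ⟨U₁.map W.subtype, ?_, ?_⟩
  · rw [Submodule.finrank_map_subtype_eq]
    exact hU₁rank
  · intro u hu u' hu'
    rw [Submodule.mem_map] at hu hu'
    obtain ⟨x, hx, rfl⟩ := hu
    obtain ⟨y, hy, rfl⟩ := hu'
    show β (x : V) (y : V) = 0
    rw [← hmkβ]
    exact hUqiso _ (Submodule.mem_comap.mp hx) _ (Submodule.mem_comap.mp hy)

end QBicProof

/-- a nonsingular q-bic form on a (2m+2)-dimensional vector space over an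
algebraically closed field admits an (m+1)-dimensional totally isotropic subspace. -/
theorem stmt_4 {p q ν m : ℕ} [Fact p.Prime] (hν : 0 < ν) (hq : q = p ^ ν)
    {k : Type*} [Field k] [IsAlgClosed k] [CharP k p]
    {V : Type*} [AddCommGroup V] [Module k V] [FiniteDimensional k V]
    (hdim : Module.finrank k V = 2 * m + 2)
    (β : V → V → k)
    (haddl : ∀ u v w : V, β (u + v) w = β u w + β v w)
    (haddr : ∀ u v w : V, β u (v + w) = β u v + β u w)
    (hsmull : ∀ (c : k) (u v : V), β (c • u) v = c ^ q * β u v)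
    (hsmulr : ∀ (c : k) (u v : V), β u (c • v) = c * β u v)
    (hnsl : ∀ v : V, (∀ w : V, β v w = 0) → v = 0)
    (hnsr : ∀ w : V, (∀ v : V, β v w = 0) → w = 0) :
    ∃ U : Submodule k V, Module.finrank k U = m + 1 ∧
      ∀ u ∈ U, ∀ u' ∈ U, β u u' = 0 := by
  have hq2 : 2 ≤ q := by
    have hp2 := (Fact.out : p.Prime).two_le
    calc 2 ≤ p := hp2
      _ ≤ p ^ ν := Nat.le_self_pow (by omega) p
      _ = q := hq.symm
  have hfrob : ∀ a b : k, (a + b) ^ q = a ^ q + b ^ q := by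
    intro a b
    rw [hq]
    exact add_pow_char_pow a b p ν
  have hβ : QBicProof.IsQBic q k V β := ⟨haddl, haddr, hsmull, hsmulr⟩
  obtain ⟨U, hU1, hU2⟩ :=
    QBicProof.qbic_aux hq2 hfrob (2 * m + 2) V β hβ hnsl hnsr hdim
  refine ⟨U, ?_, hU2⟩
  rw [hU1]
  omega
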